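/- For every r ≥ r_* one has 3Mr³ − (8M² + 4Q²)r² + 15MQ²r − 6Q⁴ > 0. Equivalently, setting w(r) = (2/r)·Υ(r), for all r ≥ r_* the identity −d/dr( r²·Υ(r)·w'(r) ) = (4/r⁵)·( 3Mr³ − (8M² + 4Q²)r² + 15MQ²r − 6Q⁴ ) holds and this quantity is strictly positive. -/

import Mathlib

noncomputable section

/-- The Reissner–Nordström lapse function `Υ(r) = 1 - 2M/r + Q²/r²`. -/
def Upsilon (M Q r : ℝ) : ℝ := 1 - 2*M/r + Q^2/r^2

/-- The radius `r_* = 2M + √(4M² - 3Q²)`. -/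
def rstar (M Q : ℝ) : ℝ := 2*M + Real.sqrt (4*M^2 - 3*Q^2)

/-- The weight `w(r) = (2/r)·Υ(r)`. -/
def wfull (M Q : ℝ) (r : ℝ) : ℝ := (2 / r) * Upsilon M Q r

lemma hasDerivAt_wfull (M Q s : ℝ) (hs : s ≠ 0) :
    HasDerivAt (wfull M Q) (-2/s^2 + 8*M/s^3 - 6*Q^2/s^4) s := by
  have h1 : HasDerivAt (fun t : ℝ => 2 / t) ((0 * s - 2 * 1) / s ^ 2) s :=
    (hasDerivAt_const s (2:ℝ)).div (hasDerivAt_id s) hs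
  have h2 : HasDerivAt (fun t : ℝ => 2*M / t) ((0 * s - 2*M * 1) / s ^ 2) s :=
    (hasDerivAt_const s (2*M)).div (hasDerivAt_id s) hs
  have h3 : HasDerivAt (fun t : ℝ => Q^2 / t^2)
      ((0 * s^2 - Q^2 * (2 * s ^ 1)) / (s ^ 2) ^ 2) s :=
    (hasDerivAt_const s (Q^2)).div (by simpa using hasDerivAt_pow 2 s) (pow_ne_zero 2 hs)
  have hU : HasDerivAt (Upsilon M Q)
      (0 - (0 * s - 2*M * 1) / s ^ 2 + (0 * s^2 - Q^2 * (2 * s ^ 1)) / (s ^ 2) ^ 2) s :=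
    ((hasDerivAt_const s 1).sub h2).add h3
  have := h1.mul hU
  have heq : wfull M Q = fun t : ℝ => (2 / t) * Upsilon M Q t := rfl
  rw [heq]
  refine this.congr_deriv ?_
  unfold Upsilon
  field_simp
  ring

theorem cubic_positive_beyond_rstar (M Q : ℝ) (hM : 0 < M) (hQ : |Q| < M) :
    ∀ r : ℝ, rstar M Q ≤ r →
      (0 < 3*M*r^3 - (8*M^2 + 4*Q^2)*r^2 + 15*M*Q^2*r - 6*Q^4) ∧
      HasDerivAt (fun s => s^2 * Upsilon M Q s * deriv (wfull M Q) s)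
        (-((4 / r^5) * (3*M*r^3 - (8*M^2 + 4*Q^2)*r^2 + 15*M*Q^2*r - 6*Q^4))) r := by
  intro r hr
  have hQ2 : Q^2 < M^2 := by
    have h := abs_lt.mp hQ
    nlinarith [abs_nonneg Q, sq_abs Q, h.1, h.2]
  have hsqrt : M ≤ Real.sqrt (4*M^2 - 3*Q^2) := by
    have hnn : (0:ℝ) ≤ 4*M^2 - 3*Q^2 := by nlinarith
    nlinarith [Real.sq_sqrt hnn, Real.sqrt_nonneg (4*M^2 - 3*Q^2)]
  have hr3 : 3*M ≤ r := by
    have : 3*M ≤ rstar M Q := by unfold rstar; linarith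
    linarith
  have hrpos : 0 < r := by nlinarith
  have hrne : r ≠ 0 := hrpos.ne'
  have h1 : (0:ℝ) ≤ r - 3*M := by linarith
  constructor
  · have key : 3*M*r^3 - (8*M^2 + 4*Q^2)*r^2 + 15*M*Q^2*r - 6*Q^4
        = 3*M*(r-3*M)^3 + (19*M^2-4*Q^2)*(r-3*M)^2
          + (33*M^3-9*M*Q^2)*(r-3*M) + (9*M^4+9*M^2*Q^2-6*Q^4) := by ring
    have t1 : 0 ≤ 3*M*(r-3*M)^3 := mul_nonneg (by linarith) (pow_nonneg h1 3)
    have t2 : 0 ≤ (19*M^2-4*Q^2)*(r-3*M)^2 := mul_nonneg (by nlinarith) (sq_nonneg _)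
    have t3 : 0 ≤ (33*M^3-9*M*Q^2)*(r-3*M) := mul_nonneg (by nlinarith) h1
    have t4 : 0 < 9*M^4+9*M^2*Q^2-6*Q^4 := by nlinarith [sq_nonneg Q]
    linarith [key.ge, key.le]
  · -- derivative part
    have hdiv : ∀ (c : ℝ) (n : ℕ), HasDerivAt (fun s : ℝ => c / s^n)
        ((0 * r ^ n - c * (↑n * r ^ (n - 1))) / (r ^ n) ^ 2) r := fun c n =>
      (hasDerivAt_const r c).div (hasDerivAt_pow n r) (pow_ne_zero n hrne)
    have hH : HasDerivAt
        (fun s : ℝ => (-2 : ℝ) + (12*M) / s^1 - (16*M^2 + 8*Q^2) / s^2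
            + (20*M*Q^2) / s^3 - (6*Q^4) / s^4)
        ((0 + (0 * r ^ 1 - 12*M * (↑(1:ℕ) * r ^ (1 - 1))) / (r ^ 1) ^ 2
          - (0 * r ^ 2 - (16*M^2 + 8*Q^2) * (↑(2:ℕ) * r ^ (2 - 1))) / (r ^ 2) ^ 2
          + (0 * r ^ 3 - (20*M*Q^2) * (↑(3:ℕ) * r ^ (3 - 1))) / (r ^ 3) ^ 2
          - (0 * r ^ 4 - (6*Q^4) * (↑(4:ℕ) * r ^ (4 - 1))) / (r ^ 4) ^ 2)) r :=
      ((((hasDerivAt_const r (-2)).add (hdiv (12*M) 1)).sub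
        (hdiv (16*M^2 + 8*Q^2) 2)).add (hdiv (20*M*Q^2) 3)).sub (hdiv (6*Q^4) 4)
    have hev : (fun s => s^2 * Upsilon M Q s * deriv (wfull M Q) s) =ᶠ[nhds r]
        (fun s : ℝ => (-2 : ℝ) + (12*M) / s^1 - (16*M^2 + 8*Q^2) / s^2
            + (20*M*Q^2) / s^3 - (6*Q^4) / s^4) := by
      filter_upwards [eventually_ne_nhds hrne] with s hs
      rw [(hasDerivAt_wfull M Q s hs).deriv]
      unfold Upsilon
      field_simp
      ring
    have hfinal := hH.congr_of_eventuallyEq hev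
    refine hfinal.congr_deriv ?_
    field_simp
    ring
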